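/- With E the span of the unit vectors in ℓ_p(ℓ₁ⁿ) (1 < p < ∞) and F((xₙ)) = ∑ₙ cₙ F₀(xₙ) as above: if (cₙ log n) is unbounded, then there is no linear map T : E → ℝ and constant C with |T(x) − F(x)| ≤ C‖x‖ for all x ∈ E. (Hint: F(e_{i,n}) = 0 for all unit vectors while F((1/n)∑_{i=1}^n e_{i,n}) = −cₙ log n.) -/

import Mathlib

/-- The Ribe function on `ℓ₁ⁿ = (Fin n → ℝ, ‖·‖₁)`,
with the convention `0 * log 0 = 0` (note `Real.log 0 = 0`). -/
noncomputable def ribeFin {n : ℕ} (x : Fin n → ℝ) : ℝ :=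
  (∑ i, x i * Real.log |x i|) - (∑ i, x i) * Real.log |∑ i, x i|

/-- The ℓ_p norm of a finitely supported element of `ℓ_p(ℓ₁ⁿ)`. -/
noncomputable def lpNorm (p : ℝ) (x : Π₀ n : ℕ, (Fin n → ℝ)) : ℝ :=
  (∑' n : ℕ, (∑ i, |x n i|) ^ p) ^ (1 / p)

lemma ribeFin_zero {n : ℕ} : ribeFin (0 : Fin n → ℝ) = 0 := by
  simp [ribeFin]

lemma ribeFin_unit {n : ℕ} (i : Fin n) : ribeFin (Pi.single i (1:ℝ)) = 0 := by
  unfold ribeFin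
  rw [Finset.sum_eq_zero, Finset.sum_pi_single']
  · simp
  · intro j _
    rcases eq_or_ne j i with h | h <;> simp [Pi.single_apply, h]

lemma sum_abs_unit {n : ℕ} (i : Fin n) : ∑ j, |Pi.single i (1:ℝ) j| = 1 := by
  rw [Finset.sum_congr rfl (g := fun j => Pi.single i (1:ℝ) j), Finset.sum_pi_single']
  · simp
  · intro j _
    rcases eq_or_ne j i with h | h <;> simp [Pi.single_apply, h]

lemma ribeFin_const (n : ℕ) (hn : 0 < n) :
    ribeFin (fun _ : Fin n => (n:ℝ)⁻¹) = - Real.log n := by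
  have hn' : (n:ℝ) ≠ 0 := Nat.cast_ne_zero.mpr hn.ne'
  unfold ribeFin
  rw [Finset.sum_const, Finset.sum_const]
  simp [Finset.card_univ, nsmul_eq_mul, mul_inv_cancel₀ hn', abs_of_nonneg (by positivity : (0:ℝ) ≤ (n:ℝ)⁻¹), Real.log_inv]
  field_simp

lemma tsumF (c : ℕ → ℝ) (n : ℕ) (v : Fin n → ℝ) :
    ∑' m, c m * ribeFin ((DFinsupp.single n v : Π₀ m : ℕ, Fin m → ℝ) m) = c n * ribeFin v := by
  set x : Π₀ m : ℕ, Fin m → ℝ := DFinsupp.single n v with hx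
  rw [tsum_eq_single (f := fun m => c m * ribeFin (x m)) n]
  · show c n * ribeFin (x n) = _
    rw [hx, DFinsupp.single_eq_same]
  · intro m hm
    show c m * ribeFin (x m) = 0
    rw [hx, DFinsupp.single_eq_of_ne hm, ribeFin_zero, mul_zero]

lemma lpNorm_single (p : ℝ) (hp : 0 < p) (n : ℕ) (v : Fin n → ℝ)
    (hv : ∑ i, |v i| = 1) : lpNorm p (DFinsupp.single n v) = 1 := by
  unfold lpNorm
  set x : Π₀ m : ℕ, Fin m → ℝ := DFinsupp.single n v with hx
  rw [tsum_eq_single (f := fun m => (∑ i, |x m i|) ^ p) n]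
  · show ((∑ i, |x n i|) ^ p) ^ (1/p) = 1
    rw [hx, DFinsupp.single_eq_same, hv, Real.one_rpow, Real.one_rpow]
  · intro m hm
    show (∑ i, |x m i|) ^ p = 0
    rw [hx, DFinsupp.single_eq_of_ne hm]
    simp [Real.zero_rpow hp.ne']


theorem kalton_peck_F_does_not_split
    (p : ℝ) (hp : 1 < p) (c : ℕ → ℝ)
    (hc : ¬ BddAbove (Set.range fun n : ℕ => |c n * Real.log n|)) :
    ¬ ∃ (T : (Π₀ n : ℕ, (Fin n → ℝ)) →ₗ[ℝ] ℝ) (C : ℝ),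
        ∀ x : Π₀ n : ℕ, (Fin n → ℝ),
          |T x - ∑' n : ℕ, c n * ribeFin (x n)| ≤ C * lpNorm p x := by
  rintro ⟨T, C, hT⟩
  apply hc
  have hp0 : 0 < p := lt_trans one_pos hp
  have hunit : ∀ (n : ℕ) (i : Fin n), |T (DFinsupp.single n (Pi.single i 1))| ≤ C := by
    intro n i
    have h := hT (DFinsupp.single n (Pi.single i 1))
    rw [tsumF, ribeFin_unit, mul_zero, sub_zero,
      lpNorm_single p hp0 n _ (sum_abs_unit i), mul_one] at h
    exact h
  have hC : 0 ≤ C := le_trans (abs_nonneg _) (hunit 1 0)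
  refine ⟨2 * C, fun y hy => ?_⟩
  obtain ⟨n, rfl⟩ := hy
  show |c n * Real.log n| ≤ 2 * C
  rcases Nat.eq_zero_or_pos n with h0 | hn
  · subst h0; simp; positivity
  have hn' : (n:ℝ) ≠ 0 := Nat.cast_ne_zero.mpr hn.ne'
  set x : Π₀ m : ℕ, Fin m → ℝ := DFinsupp.single n (fun _ : Fin n => (n:ℝ)⁻¹) with hxdef
  have hsum : ∑ _i : Fin n, |(n:ℝ)⁻¹| = 1 := by
    rw [Finset.sum_const, Finset.card_univ, Fintype.card_fin, nsmul_eq_mul,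
      abs_of_nonneg (by positivity : (0:ℝ) ≤ (n:ℝ)⁻¹), mul_inv_cancel₀ hn']
  have h1 := hT x
  rw [hxdef, tsumF, ribeFin_const n hn, lpNorm_single p hp0 n _ hsum, mul_one] at h1
  have h3 : (fun _ : Fin n => (n:ℝ)⁻¹) = ∑ i : Fin n, (n:ℝ)⁻¹ • (Pi.single i (1:ℝ) : Fin n → ℝ) := by
    rw [← Finset.univ_sum_single (fun _ : Fin n => (n:ℝ)⁻¹)]
    congr 1; funext i; rw [← Pi.single_smul, smul_eq_mul, mul_one]
  have h4 : x = ∑ i : Fin n, (n:ℝ)⁻¹ • DFinsupp.single n (Pi.single i (1:ℝ)) := by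
    rw [hxdef, h3, ← DFinsupp.lsingle_apply (R := ℝ), map_sum]
    simp [map_smul, DFinsupp.lsingle_apply]
  have hTx : T x = ∑ i : Fin n, (n:ℝ)⁻¹ * T (DFinsupp.single n (Pi.single i (1:ℝ))) := by
    rw [h4, map_sum]
    simp [map_smul, smul_eq_mul]
  have h2 : |T x| ≤ C := by
    calc |T x| = |∑ i : Fin n, (n:ℝ)⁻¹ * T (DFinsupp.single n (Pi.single i (1:ℝ)))| := by
          rw [hTx]
      _ ≤ ∑ i : Fin n, |(n:ℝ)⁻¹ * T (DFinsupp.single n (Pi.single i (1:ℝ)))| :=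
          Finset.abs_sum_le_sum_abs _ _
      _ ≤ ∑ _i : Fin n, (n:ℝ)⁻¹ * C := Finset.sum_le_sum (fun i _ => by
          rw [abs_mul, abs_of_nonneg (by positivity : (0:ℝ) ≤ (n:ℝ)⁻¹)]
          exact mul_le_mul_of_nonneg_left (hunit n i) (by positivity))
      _ = C := by
          rw [Finset.sum_const, Finset.card_univ, Fintype.card_fin, nsmul_eq_mul]
          field_simp
  have habs : |c n * Real.log n| = |(T x - c n * (-Real.log n)) - T x| := by
    congr 1; ring
  have := abs_sub (T x - c n * (-Real.log n)) (T x)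
  rw [← habs] at this
  linarith
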